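/- Let Y_1, Y_2, … be random vectors in ℝ^K such that √n(Y_n − μ) converges in distribution to N(0, Σ) for some μ ∈ ℝ^K and positive definite Σ ∈ ℝ^{K×K}. Let (α_n) be a sequence of positive reals with α_n → ∞ and α_n/√n → 0 as n → ∞. Define Y_n* = min_k Y_{nk} and μ* = min_k μ_k. Then for every k ∈ {1, …, K}, exp(−α_n (Y_{nk} − Y_n*)) converges in probability to the indicator 𝟙(μ_k = μ*). -/

import Mathlib

open MeasureTheory Filter Topology

/-- `ν` is the multivariate normal distribution on `ℝ^K` with mean `m` and covariance
matrix `S`, characterized via one-dimensional projections. -/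
def IsGaussianLaw {K : ℕ} (ν : Measure (EuclideanSpace ℝ (Fin K)))
    (m : EuclideanSpace ℝ (Fin K)) (S : Matrix (Fin K) (Fin K) ℝ) : Prop :=
  ∀ a : Fin K → ℝ,
    Measure.map (fun x => ∑ i, a i * x i) ν
      = ProbabilityTheory.gaussianReal (∑ i, a i * m i)
          (Real.toNNReal (∑ i, ∑ j, a i * S i j * a j))

/-- Convergence in distribution via bounded continuous test functions. -/
def TendstoInDistribution {Ω E : Type*} [MeasurableSpace Ω] [MeasurableSpace E]
    [TopologicalSpace E] (P : Measure Ω) (V : ℕ → Ω → E) (ν : Measure E) : Prop :=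
  ∀ f : BoundedContinuousFunction E ℝ,
    Tendsto (fun n => ∫ ω, f (V n ω) ∂P) atTop (𝓝 (∫ x, f x ∂ν))

lemma coord_le_norm {K : ℕ} (x : EuclideanSpace ℝ (Fin K)) (k : Fin K) : |x k| ≤ ‖x‖ := by
  rw [EuclideanSpace.norm_eq, ← Real.sqrt_sq_eq_abs]
  apply Real.sqrt_le_sqrt
  have h : x k ^ 2 = ‖x k‖ ^ 2 := by simp [Real.norm_eq_abs, sq_abs]
  rw [h]
  exact Finset.single_le_sum (fun i _ => sq_nonneg ‖x i‖) (Finset.mem_univ k)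

lemma sInf_range_le_add {K : ℕ} [Nonempty (Fin K)] (x y : Fin K → ℝ) (C : ℝ)
    (h : ∀ j, |x j - y j| ≤ C) :
    sInf (Set.range x) ≤ sInf (Set.range y) + C := by
  obtain ⟨j, hj⟩ := (Set.range_nonempty y).csInf_mem (Set.finite_range y)
  calc sInf (Set.range x) ≤ x j := csInf_le (Set.finite_range x).bddBelow ⟨j, rfl⟩
  _ ≤ y j + C := by have := abs_le.1 (h j); linarith [this.1, this.2]
  _ = sInf (Set.range y) + C := by rw [hj]

lemma abs_sInf_sub_sInf_le {K : ℕ} [Nonempty (Fin K)] (x y : Fin K → ℝ) (C : ℝ)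
    (h : ∀ j, |x j - y j| ≤ C) :
    |sInf (Set.range x) - sInf (Set.range y)| ≤ C := by
  rw [abs_le]
  constructor
  · have := sInf_range_le_add y x C (fun j => by rw [abs_sub_comm]; exact h j)
    linarith
  · have := sInf_range_le_add x y C h
    linarith

lemma tendsto_meas_mul_norm {K : ℕ} {Ω : Type*} [MeasurableSpace Ω]
    (P : Measure Ω) [IsProbabilityMeasure P]
    (V : ℕ → Ω → EuclideanSpace ℝ (Fin K))
    (ν : Measure (EuclideanSpace ℝ (Fin K))) [IsProbabilityMeasure ν]
    (hconv : TendstoInDistribution P V ν)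
    (c : ℕ → ℝ) (hc0 : ∀ n, 0 ≤ c n) (hc : Tendsto c atTop (𝓝 0))
    {ε : ℝ} (hε : 0 < ε) :
    Tendsto (fun n => P {ω | ε ≤ c n * ‖V n ω‖}) atTop (𝓝 0) := by
  -- Step 0: eventually, the norm of `V n` is a.e.-measurable
  have hmeas : ∀ᶠ n in atTop, AEMeasurable (fun ω => ‖V n ω‖) P := by
    have hcont : Continuous fun x : EuclideanSpace ℝ (Fin K) => (1 + ‖x‖)⁻¹ := by
      refine Continuous.inv₀ (by continuity) (fun x => ?_)
      positivity
    set f₀ : BoundedContinuousFunction (EuclideanSpace ℝ (Fin K)) ℝ :=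
      BoundedContinuousFunction.ofNormedAddCommGroup _ hcont 1 (fun x => by
        rw [Real.norm_eq_abs, abs_of_nonneg (by positivity)]
        rw [inv_le_one_iff₀]
        right; linarith [norm_nonneg x]) with hf₀
    have hf₀x : ∀ x, f₀ x = (1 + ‖x‖)⁻¹ := fun x => rfl
    have hpos : 0 < ∫ x, f₀ x ∂ν := by
      rw [integral_pos_iff_support_of_nonneg]
      · have : Function.support (f₀ : EuclideanSpace ℝ (Fin K) → ℝ) = Set.univ := by
          ext x; simp only [Function.mem_support, Set.mem_univ, iff_true, hf₀x]
          positivity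
        rw [this]; simp
      · intro x; rw [hf₀x]; positivity
      · exact f₀.integrable ν
    have := (hconv f₀).eventually (eventually_gt_nhds hpos)
    filter_upwards [this] with n hn
    by_cases hm : AEStronglyMeasurable (fun ω => f₀ (V n ω)) P
    · have hg : AEMeasurable (fun ω => (1 + ‖V n ω‖)⁻¹) P := by
        have := hm.aemeasurable
        simpa only [hf₀x] using this
      have : AEMeasurable (fun ω => ((1 + ‖V n ω‖)⁻¹)⁻¹ - 1) P :=
        hg.inv.sub aemeasurable_const
      refine this.congr (Eventually.of_forall fun ω => ?_)
      show (1 + ‖V n ω‖)⁻¹⁻¹ - 1 = ‖V n ω‖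
      rw [inv_inv]; ring
    · rw [integral_non_aestronglyMeasurable hm] at hn
      exact absurd hn (lt_irrefl 0)
  -- main argument
  rw [ENNReal.tendsto_atTop_zero]
  intro δ hδ
  -- reduce to a real-valued bound
  obtain ⟨r, hr, hrδ⟩ : ∃ r : ℝ, 0 < r ∧ ENNReal.ofReal r ≤ δ := by
    refine ⟨(min δ 1).toReal, ?_, ?_⟩
    · rw [ENNReal.toReal_pos_iff]
      exact ⟨lt_min hδ one_pos, lt_of_le_of_lt (min_le_right _ _) (by norm_num)⟩
    · rw [ENNReal.ofReal_toReal (by simp [ne_top_of_le_ne_top (by norm_num) (min_le_right δ 1)])]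
      exact min_le_left _ _
  -- choose the truncation level M
  have hS : ∀ m : ℕ, MeasurableSet {x : EuclideanSpace ℝ (Fin K) | (m : ℝ) ≤ ‖x‖} := by
    intro m
    exact measurableSet_le measurable_const (measurable_norm)
  obtain ⟨M, hM⟩ : ∃ M : ℕ, ν {x | (M : ℝ) ≤ ‖x‖} ≤ ENNReal.ofReal (r / 2) := by
    have hanti : Antitone fun m : ℕ => {x : EuclideanSpace ℝ (Fin K) | (m : ℝ) ≤ ‖x‖} := by
      intro a b hab x hx
      exact le_trans (by exact_mod_cast hab : (a : ℝ) ≤ (b : ℝ)) hx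
    have hiInter : ⋂ m : ℕ, {x : EuclideanSpace ℝ (Fin K) | (m : ℝ) ≤ ‖x‖} = ∅ := by
      ext x
      simp only [Set.mem_iInter, Set.mem_setOf_eq, Set.mem_empty_iff_false, iff_false, not_forall,
        not_le]
      obtain ⟨m, hm⟩ := exists_nat_gt ‖x‖
      exact ⟨m, hm⟩
    have htend := tendsto_measure_iInter_atTop (μ := ν)
      (fun m => (hS m).nullMeasurableSet) hanti ⟨0, measure_ne_top ν _⟩
    rw [hiInter, measure_empty] at htend
    have := (ENNReal.tendsto_atTop_zero.mp htend) (ENNReal.ofReal (r / 2))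
      (by simp [ENNReal.ofReal_pos]; linarith)
    obtain ⟨N, hN⟩ := this
    exact ⟨N, hN N le_rfl⟩
  -- the test function
  have hφcont : Continuous fun x : EuclideanSpace ℝ (Fin K) =>
      min 1 (max 0 (‖x‖ - (M : ℝ))) :=
    continuous_const.min (continuous_const.max (continuous_norm.sub continuous_const))
  set f : BoundedContinuousFunction (EuclideanSpace ℝ (Fin K)) ℝ :=
    BoundedContinuousFunction.ofNormedAddCommGroup _ hφcont 1 (fun x => by
      rw [Real.norm_eq_abs, abs_of_nonneg (le_min zero_le_one (le_max_left 0 _))]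
      exact min_le_left _ _) with hf
  have hfx : ∀ x, f x = min 1 (max 0 (‖x‖ - (M : ℝ))) := fun x => rfl
  have hf0 : ∀ x, (0 : ℝ) ≤ f x := fun x => by
    rw [hfx]; exact le_min zero_le_one (le_max_left 0 _)
  have hf1 : ∀ x, f x ≤ 1 := fun x => by rw [hfx]; exact min_le_left _ _
  -- ∫ f dν is small
  have hfν : ∫ x, f x ∂ν ≤ r / 2 := by
    have hle : ∀ x, f x ≤ Set.indicator {x : EuclideanSpace ℝ (Fin K) | (M : ℝ) ≤ ‖x‖}
        (fun _ => (1 : ℝ)) x := by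
      intro x
      by_cases hx : x ∈ {x : EuclideanSpace ℝ (Fin K) | (M : ℝ) ≤ ‖x‖}
      · rw [Set.indicator_of_mem hx]; exact hf1 x
      · rw [Set.indicator_of_notMem hx, hfx]
        apply le_of_eq
        have hx' : ‖x‖ < (M : ℝ) := by simpa using (not_le.mp hx)
        rw [max_eq_left (by linarith), min_eq_right zero_le_one]
    calc ∫ x, f x ∂ν ≤ ∫ x, Set.indicator {x : EuclideanSpace ℝ (Fin K) | (M : ℝ) ≤ ‖x‖}
          (fun _ => (1 : ℝ)) x ∂ν := by
          refine integral_mono (f.integrable ν) ?_ hle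
          exact (integrable_indicator_iff (hS M)).mpr ((integrableOn_const_iff).mpr (Or.inr
            (measure_lt_top ν _)))
    _ = (ν {x | (M : ℝ) ≤ ‖x‖}).toReal := by
          rw [integral_indicator_const (1 : ℝ) (hS M)]; simp; rfl
    _ ≤ r / 2 := by
          have := ENNReal.toReal_mono ENNReal.ofReal_ne_top hM
          rwa [ENNReal.toReal_ofReal (by linarith)] at this
  -- eventual bound on ∫ f(V n)
  have hev1 : ∀ᶠ n in atTop, ∫ ω, f (V n ω) ∂P ≤ r := by
    have := (hconv f).eventually (eventually_lt_nhds (show ∫ x, f x ∂ν < r/2 + r/2 by linarith))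
    filter_upwards [this] with n hn
    linarith
  have hev2 : ∀ᶠ n in atTop, c n * ((M : ℝ) + 1) < ε :=
    hc.eventually (by
      have : (fun t : ℝ => t * ((M : ℝ) + 1)) 0 = 0 := by ring
      have hcont2 : Continuous fun t : ℝ => t * ((M : ℝ) + 1) := by continuity
      have := hcont2.tendsto 0
      rw [show (0 : ℝ) * ((M : ℝ) + 1) = 0 by ring] at this
      exact this.eventually (eventually_lt_nhds hε))
  obtain ⟨N, hN⟩ := (hmeas.and (hev1.and hev2)).exists_forall_of_atTop
  refine ⟨N, fun n hn => ?_⟩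
  obtain ⟨hmn, hIn, hcn⟩ := hN n hn
  -- measurability and integrability of f ∘ V n
  have hφ : Continuous fun t : ℝ => min 1 (max 0 (t - (M : ℝ))) :=
    continuous_const.min (continuous_const.max (continuous_id.sub continuous_const))
  have hgm : AEStronglyMeasurable (fun ω => f (V n ω)) P := by
    have h1 : AEMeasurable (fun ω => min 1 (max 0 (‖V n ω‖ - (M : ℝ)))) P :=
      hφ.measurable.comp_aemeasurable hmn
    exact (h1.congr (Eventually.of_forall fun ω => (hfx (V n ω)).symm)).aestronglyMeasurable
  have hgi : Integrable (fun ω => f (V n ω)) P := by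
    refine Integrable.mono' (integrable_const 1) hgm (Eventually.of_forall fun ω => ?_)
    rw [Real.norm_eq_abs, abs_of_nonneg (hf0 _)]; exact hf1 _
  have hmark := mul_meas_ge_le_integral_of_nonneg
    (Eventually.of_forall fun ω => hf0 (V n ω)) hgi 1
  rw [one_mul] at hmark
  have hsub : {ω | ε ≤ c n * ‖V n ω‖} ⊆ {ω | (1 : ℝ) ≤ f (V n ω)} := by
    intro ω hω
    have hω' : ε ≤ c n * ‖V n ω‖ := hω
    have hMV : (M : ℝ) + 1 ≤ ‖V n ω‖ := by
      by_contra hcon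
      push_neg at hcon
      have : c n * ‖V n ω‖ ≤ c n * ((M : ℝ) + 1) := mul_le_mul_of_nonneg_left hcon.le (hc0 n)
      linarith
    show (1 : ℝ) ≤ f (V n ω)
    rw [hfx]
    exact le_min le_rfl (le_max_of_le_right (by linarith))
  calc P {ω | ε ≤ c n * ‖V n ω‖} ≤ P {ω | (1 : ℝ) ≤ f (V n ω)} := measure_mono hsub
  _ ≤ ENNReal.ofReal r := by
      rw [ENNReal.le_ofReal_iff_toReal_le (measure_ne_top P _) hr.le]
      exact hmark.trans hIn
  _ ≤ δ := hrδ


/-- Suppose `√n (Y_n − μ) ⇒ N(0, Σ)` with `Σ` positive definite, and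
let `α_n > 0` with `α_n → ∞` and `α_n / √n → 0`.  With `Y_n* = min_k Y_{nk}` and
`μ* = min_k μ_k`, for every `k` the soft-selection score
`exp(−α_n (Y_{nk} − Y_n*))` converges in probability to `𝟙(μ_k = μ*)`. -/
theorem stmt8 {K : ℕ} (hK : 1 ≤ K)
    {Ω : Type*} [MeasurableSpace Ω] (P : Measure Ω) [IsProbabilityMeasure P]
    (Y : ℕ → Ω → EuclideanSpace ℝ (Fin K))
    (μ : EuclideanSpace ℝ (Fin K)) (Sig : Matrix (Fin K) (Fin K) ℝ) (hSig : Sig.PosDef)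
    (ν : Measure (EuclideanSpace ℝ (Fin K))) [IsProbabilityMeasure ν]
    (hν : IsGaussianLaw ν 0 Sig)
    (hclt : TendstoInDistribution P (fun n ω => (Real.sqrt n) • (Y n ω - μ)) ν)
    (α : ℕ → ℝ) (hαpos : ∀ n, 0 < α n)
    (hAlphaTop : Tendsto α atTop atTop)
    (hαn : Tendsto (fun n => α n / Real.sqrt n) atTop (𝓝 0)) :
    ∀ k : Fin K,
      TendstoInMeasure P
        (fun n ω => Real.exp (-(α n) * (Y n ω k - sInf (Set.range fun j => Y n ω j))))
        atTop
        (fun _ => if μ k = sInf (Set.range fun j => μ j) then (1 : ℝ) else 0) := by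
  intro k
  have hNE : Nonempty (Fin K) := ⟨⟨0, hK⟩⟩
  set μs := sInf (Set.range fun j => μ j) with hμs
  -- key convergence in measure of `α n * ‖Y n − μ‖` to zero
  have key : ∀ ε : ℝ, 0 < ε →
      Tendsto (fun n => P {ω | ε ≤ α n * ‖Y n ω - μ‖}) atTop (𝓝 0) := by
    intro ε hε
    have hc0 : ∀ n, 0 ≤ α n / Real.sqrt n :=
      fun n => div_nonneg (hαpos n).le (Real.sqrt_nonneg _)
    have h := tendsto_meas_mul_norm P (fun n ω => (Real.sqrt n) • (Y n ω - μ)) ν hclt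
      (fun n => α n / Real.sqrt n) hc0 hαn hε
    refine (tendsto_congr' ?_).mp h
    filter_upwards [eventually_ge_atTop 1] with n hn
    congr 1
    ext ω
    have hs : (0 : ℝ) < Real.sqrt n := Real.sqrt_pos.mpr (by exact_mod_cast hn)
    simp only [Set.mem_setOf_eq, norm_smul, Real.norm_eq_abs,
      abs_of_nonneg (Real.sqrt_nonneg (n : ℝ))]
    rw [show α n / Real.sqrt n * (Real.sqrt n * ‖Y n ω - μ‖) = α n * ‖Y n ω - μ‖ by
      field_simp]
  -- bound on the difference of gaps
  have hbound : ∀ n ω,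
      |(Y n ω k - sInf (Set.range fun j => Y n ω j)) - (μ k - μs)| ≤ 2 * ‖Y n ω - μ‖ := by
    intro n ω
    have hcoord : ∀ j, |Y n ω j - μ j| ≤ ‖Y n ω - μ‖ := by
      intro j
      have := coord_le_norm (Y n ω - μ) j
      simpa [PiLp.sub_apply] using this
    have hinf : |sInf (Set.range fun j => Y n ω j) - μs| ≤ ‖Y n ω - μ‖ := by
      rw [hμs]
      exact abs_sInf_sub_sInf_le (fun j => Y n ω j) (fun j => μ j) _ hcoord
    have h1 := hcoord k
    calc |(Y n ω k - sInf (Set.range fun j => Y n ω j)) - (μ k - μs)|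
        = |(Y n ω k - μ k) + -(sInf (Set.range fun j => Y n ω j) - μs)| := by ring_nf
      _ ≤ |Y n ω k - μ k| + |-(sInf (Set.range fun j => Y n ω j) - μs)| := abs_add_le _ _
      _ = |Y n ω k - μ k| + |sInf (Set.range fun j => Y n ω j) - μs| := by rw [abs_neg]
      _ ≤ ‖Y n ω - μ‖ + ‖Y n ω - μ‖ := add_le_add h1 hinf
      _ = 2 * ‖Y n ω - μ‖ := by ring
  have htnonneg : ∀ n ω, 0 ≤ Y n ω k - sInf (Set.range fun j => Y n ω j) := by
    intro n ω
    have : sInf (Set.range fun j => Y n ω j) ≤ Y n ω k :=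
      csInf_le (Set.finite_range _).bddBelow ⟨k, rfl⟩
    linarith
  have hμsle : μs ≤ μ k := by
    rw [hμs]; exact csInf_le (Set.finite_range _).bddBelow ⟨k, rfl⟩
  by_cases hcase : μ k = μs
  · -- the minimal coordinate: scores tend to 1
    rw [if_pos hcase]
    rw [tendstoInMeasure_iff_dist]; intro ε hε
    by_cases hε1 : ε < 1
    · set η := -Real.log (1 - ε) with hη
      have hη0 : 0 < η := by
        have : Real.log (1 - ε) < 0 := Real.log_neg (by linarith) (by linarith)
        rw [hη]; linarith
      refine tendsto_of_tendsto_of_tendsto_of_le_of_le' tendsto_const_nhds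
        (key (η / 2) (by linarith)) (Eventually.of_forall fun n => zero_le)
        (Eventually.of_forall fun n => measure_mono ?_)
      intro ω hω
      set t := Y n ω k - sInf (Set.range fun j => Y n ω j) with ht
      have ht0 : 0 ≤ t := htnonneg n ω
      have hexp_le : Real.exp (-(α n) * t) ≤ 1 :=
        Real.exp_le_one_iff.mpr (mul_nonpos_of_nonpos_of_nonneg (by linarith [hαpos n]) ht0)
      have hω' : ε ≤ 1 - Real.exp (-(α n) * t) := by
        have hd : dist (Real.exp (-(α n) * t)) 1 = 1 - Real.exp (-(α n) * t) := by
          rw [Real.dist_eq, abs_of_nonpos (by linarith)]; ring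
        have := hω
        rw [Set.mem_setOf_eq, hd] at this
        exact this
      have h2 : Real.exp (-(α n) * t) ≤ 1 - ε := by linarith
      have h3 : -(α n) * t ≤ Real.log (1 - ε) := by
        have := Real.log_le_log (Real.exp_pos _) h2
        rwa [Real.log_exp] at this
      have h4 : η ≤ α n * t := by rw [hη]; linarith
      have h5 : α n * t ≤ α n * (2 * ‖Y n ω - μ‖) := by
        refine mul_le_mul_of_nonneg_left ?_ (hαpos n).le
        have hb := abs_le.1 (hbound n ω)
        rw [hcase] at hb
        have := hb.2
        simp only [sub_self, sub_zero] at this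
        linarith [this]
      show ω ∈ {ω | η / 2 ≤ α n * ‖Y n ω - μ‖}
      simp only [Set.mem_setOf_eq]
      nlinarith [hαpos n, norm_nonneg (Y n ω - μ)]
    · -- ε ≥ 1 : the exceptional set is empty
      push_neg at hε1
      have hempty : ∀ n, P {ω | ε ≤ dist
          (Real.exp (-(α n) * (Y n ω k - sInf (Set.range fun j => Y n ω j)))) 1} = 0 := by
        intro n
        convert measure_empty (μ := P)
        ext ω
        simp only [Set.mem_setOf_eq, Set.mem_empty_iff_false, iff_false, not_le]
        set t := Y n ω k - sInf (Set.range fun j => Y n ω j) with ht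
        have ht0 : 0 ≤ t := htnonneg n ω
        have hexp_pos : 0 < Real.exp (-(α n) * t) := Real.exp_pos _
        have hexp_le : Real.exp (-(α n) * t) ≤ 1 :=
          Real.exp_le_one_iff.mpr (mul_nonpos_of_nonpos_of_nonneg (by linarith [hαpos n]) ht0)
        have : dist (Real.exp (-(α n) * t)) 1 = 1 - Real.exp (-(α n) * t) := by
          rw [Real.dist_eq, abs_of_nonpos (by linarith)]; ring
        rw [this]
        linarith
      exact (tendsto_congr fun n => hempty n).mpr tendsto_const_nhds
  · -- not minimal: scores tend to 0
    rw [if_neg hcase]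
    have hd0 : 0 < μ k - μs := by
      rcases lt_or_eq_of_le hμsle with h | h
      · linarith
      · exact absurd h.symm hcase
    rw [tendstoInMeasure_iff_dist]; intro ε hε
    set L := -Real.log ε with hL
    have hev : ∀ᶠ n in atTop, L + 2 ≤ α n * (μ k - μs) := by
      filter_upwards [hAlphaTop.eventually_ge_atTop ((L + 2) / (μ k - μs))] with n hn
      rw [div_le_iff₀ hd0] at hn
      linarith [hn]
    refine tendsto_of_tendsto_of_tendsto_of_le_of_le' tendsto_const_nhds
      (key 1 one_pos) (Eventually.of_forall fun n => zero_le) ?_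
    filter_upwards [hev] with n hn
    apply measure_mono
    intro ω hω
    set t := Y n ω k - sInf (Set.range fun j => Y n ω j) with ht
    have hω' : ε ≤ Real.exp (-(α n) * t) := by
      have hd : dist (Real.exp (-(α n) * t)) 0 = Real.exp (-(α n) * t) := by
        rw [Real.dist_eq, sub_zero, abs_of_pos (Real.exp_pos _)]
      have := hω
      rw [Set.mem_setOf_eq, hd] at this
      exact this
    have h3 : α n * t ≤ L := by
      have := Real.log_le_log hε hω'
      rw [Real.log_exp] at this
      rw [hL]; linarith
    have h4 : α n * ((μ k - μs) - 2 * ‖Y n ω - μ‖) ≤ α n * t := by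
      refine mul_le_mul_of_nonneg_left ?_ (hαpos n).le
      have hb := (abs_le.1 (hbound n ω)).1
      linarith
    have hexpand : α n * ((μ k - μs) - 2 * ‖Y n ω - μ‖)
        = α n * (μ k - μs) - 2 * (α n * ‖Y n ω - μ‖) := by ring
    show ω ∈ {ω | 1 ≤ α n * ‖Y n ω - μ‖}
    simp only [Set.mem_setOf_eq]
    rw [hexpand] at h4
    linarith
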